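/- arXiv:0803.2211 — 3 statements merged into one kernel-verified Lean document; each statement's English description precedes it below -/
import Mathlib

section
/- Let (f_t) be a sequence of y-averaging maps on S^n forming an equiproper family, converging pointwise to a map g. Then g is a proper y-averaging map; that is, g maps the y-convex hull into itself and strictly shrinks the y-convex hull on every non-consensus profile. -/
open Metric Finset in
lemma aux_exists_close {E : Type*} [NormedAddCommGroup E] [NormedSpace ℝ E] {m : ℕ}
    (A B : Fin m → E) {ε : ℝ} (h : ∀ j, dist (A j) (B j) ≤ ε)
    {p : E} (hp : p ∈ convexHull ℝ (Set.range A)) :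
    ∃ q ∈ convexHull ℝ (Set.range B), dist p q ≤ ε := by
  rw [convexHull_range_eq_exists_affineCombination] at hp
  obtain ⟨s, w, hw0, hw1, rfl⟩ := hp
  refine ⟨s.affineCombination ℝ B w, affineCombination_mem_convexHull hw0 hw1, ?_⟩
  rw [affineCombination_eq_linear_combination _ _ _ hw1,
    affineCombination_eq_linear_combination _ _ _ hw1, dist_eq_norm, ← Finset.sum_sub_distrib]
  simp_rw [← smul_sub]
  calc ‖∑ i ∈ s, w i • (A i - B i)‖ ≤ ∑ i ∈ s, ‖w i • (A i - B i)‖ := norm_sum_le _ _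
    _ ≤ ∑ i ∈ s, w i * ε := by
        refine Finset.sum_le_sum fun i hi => ?_
        rw [norm_smul, Real.norm_eq_abs, abs_of_nonneg (hw0 i hi)]
        exact mul_le_mul_of_nonneg_left (by rw [← dist_eq_norm]; exact h i) (hw0 i hi)
    _ = ε := by rw [← Finset.sum_mul, hw1, one_mul]

lemma aux_hd {E : Type*} [NormedAddCommGroup E] [NormedSpace ℝ E] {m : ℕ}
    (A B : Fin m → E) {ε : ℝ} (hε : 0 ≤ ε) (h : ∀ j, dist (A j) (B j) ≤ ε) :
    Metric.hausdorffDist (convexHull ℝ (Set.range A)) (convexHull ℝ (Set.range B)) ≤ ε := by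
  apply Metric.hausdorffDist_le_of_mem_dist hε
  · exact fun p hp => aux_exists_close A B h hp
  · exact fun p hp => by
      obtain ⟨q, hq, hd⟩ := aux_exists_close B A (fun j => by rw [dist_comm]; exact h j) hp
      exact ⟨q, hq, hd⟩

/-- Pointwise limits of equiproper families of y-averaging maps are proper y-averaging
maps: if (f_t) is a sequence of y-averaging maps forming an equiproper family
(in particular each f_t is proper) converging pointwise to g, then g is a proper
y-averaging map: it maps the y-convex hull into itself and strictly shrinks the
y-convex hull on every non-consensus profile. -/
theorem limit_of_equiproper_is_proper {d n m : ℕ}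
    (S : Set (Fin d → ℝ)) (hScomp : IsCompact S)
    (y : (Fin n → Fin d → ℝ) → Fin m → Fin d → ℝ)
    (hycont : ContinuousOn y {x | ∀ i, x i ∈ S})
    (hyval : ∀ x, (∀ i, x i ∈ S) → ∀ j, y x j ∈ S)
    (hybary : ∀ x, (∀ i, x i ∈ S) → ∀ i, x i ∈ convexHull ℝ (Set.range (y x)))
    (f : ℕ → (Fin n → Fin d → ℝ) → (Fin n → Fin d → ℝ))
    (hmaps : ∀ t x, (∀ i, x i ∈ S) → ∀ i, f t x i ∈ S)
    (havg : ∀ t x, (∀ i, x i ∈ S) →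
      convexHull ℝ (Set.range (y (f t x))) ⊆ convexHull ℝ (Set.range (y x)))
    (hproper : ∀ t x, (∀ i, x i ∈ S) → (¬ ∀ i j, x i = x j) →
      convexHull ℝ (Set.range (y (f t x))) ⊂ convexHull ℝ (Set.range (y x)))
    (hequiproper : ∀ x, (∀ i, x i ∈ S) → (¬ ∀ i j, x i = x j) →
      ∃ δ > (0:ℝ), ∀ t, δ < Metric.hausdorffDist
        (convexHull ℝ (Set.range (y (f t x)))) (convexHull ℝ (Set.range (y x))))
    (g : (Fin n → Fin d → ℝ) → (Fin n → Fin d → ℝ))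
    (hlim : ∀ x, (∀ i, x i ∈ S) →
      Filter.Tendsto (fun t => f t x) Filter.atTop (nhds (g x))) :
    (∀ x, (∀ i, x i ∈ S) →
      convexHull ℝ (Set.range (y (g x))) ⊆ convexHull ℝ (Set.range (y x))) ∧
    (∀ x, (∀ i, x i ∈ S) → (¬ ∀ i j, x i = x j) →
      convexHull ℝ (Set.range (y (g x))) ⊂ convexHull ℝ (Set.range (y x))) := by
  have hgx : ∀ x, (∀ i, x i ∈ S) → ∀ i, g x i ∈ S := by
    intro x hx i
    have htend : Filter.Tendsto (fun t => f t x i) Filter.atTop (nhds (g x i)) :=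
      (tendsto_pi_nhds.mp (hlim x hx)) i
    exact hScomp.isClosed.mem_of_tendsto htend
      (Filter.Eventually.of_forall fun t => hmaps t x hx i)
  have hytend : ∀ x, (∀ i, x i ∈ S) →
      Filter.Tendsto (fun t => y (f t x)) Filter.atTop (nhds (y (g x))) := by
    intro x hx
    have h1 : Filter.Tendsto (fun t => f t x) Filter.atTop
        (nhdsWithin (g x) {x | ∀ i, x i ∈ S}) :=
      tendsto_nhdsWithin_iff.mpr ⟨hlim x hx,
        Filter.Eventually.of_forall fun t => fun i => hmaps t x hx i⟩
    exact (hycont (g x) (hgx x hx)).tendsto.comp h1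
  have hsub : ∀ x, (∀ i, x i ∈ S) →
      convexHull ℝ (Set.range (y (g x))) ⊆ convexHull ℝ (Set.range (y x)) := by
    intro x hx
    apply convexHull_min ?_ (convex_convexHull ℝ _)
    rintro p ⟨j, rfl⟩
    have hcl : IsClosed (convexHull ℝ (Set.range (y x))) :=
      (Set.finite_range (y x)).isClosed_convexHull (𝕜 := ℝ)
    have htend : Filter.Tendsto (fun t => y (f t x) j) Filter.atTop (nhds (y (g x) j)) :=
      (tendsto_pi_nhds.mp (hytend x hx)) j
    exact hcl.mem_of_tendsto htend (Filter.Eventually.of_forall fun t =>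
      havg t x hx (subset_convexHull ℝ _ ⟨j, rfl⟩))
  refine ⟨hsub, fun x hx hnc => ?_⟩
  rw [_root_.ssubset_iff_subset_ne]
  refine ⟨hsub x hx, fun heq => ?_⟩
  obtain ⟨δ, hδpos, hδ⟩ := hequiproper x hx hnc
  obtain ⟨N, hN⟩ := Metric.tendsto_atTop.mp (hytend x hx) δ hδpos
  have hclose := hN N le_rfl
  have hdle : Metric.hausdorffDist (convexHull ℝ (Set.range (y (f N x))))
      (convexHull ℝ (Set.range (y (g x)))) ≤ dist (y (f N x)) (y (g x)) :=
    aux_hd _ _ dist_nonneg (fun j => dist_le_pi_dist _ _ j)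
  rw [heq] at hdle
  linarith [hδ N]
end

section
/- Consider the time-dependent linear system on ℝ² given by f_t(x¹,x²) = ((1 − 4^{−t})x¹ + 4^{−t}x², 4^{−t}x¹ + (1 − 4^{−t})x²). For the iteration x(t+1) = f_t(x(t)) with x(1) = (0,1), it holds for all t ≥ 1 that x¹(t) < 1/3 and x²(t) > 2/3; in particular the system does not converge to consensus. -/
/-- For f_t(x¹,x²) = ((1 − 4^{−t})x¹ + 4^{−t}x², 4^{−t}x¹ + (1 − 4^{−t})x²) and the
iteration x(t+1) = f_t(x(t)) with x(1) = (0,1), for all t ≥ 1 it holds x¹(t) < 1/3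
and x²(t) > 2/3; in particular the system does not converge to consensus. -/
theorem non_equiproper_no_consensus (x : ℕ → ℝ × ℝ)
    (h1 : x 1 = (0, 1))
    (hrec : ∀ t ≥ 1, x (t + 1) =
      ((1 - 1 / (4:ℝ) ^ t) * (x t).1 + (1 / (4:ℝ) ^ t) * (x t).2,
       (1 / (4:ℝ) ^ t) * (x t).1 + (1 - 1 / (4:ℝ) ^ t) * (x t).2)) :
    (∀ t ≥ 1, (x t).1 < 1 / 3 ∧ (x t).2 > 2 / 3) ∧
    ¬ ∃ γ : ℝ, Filter.Tendsto (fun t => (x t).1) Filter.atTop (nhds γ) ∧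
        Filter.Tendsto (fun t => (x t).2) Filter.atTop (nhds γ) := by
  have key : ∀ t, 1 ≤ t → (x t).1 + (x t).2 = 1 ∧
      (x t).2 - (x t).1 ≥ 1/3 + (8/3)/4^t := by
    intro t ht
    induction t with
    | zero => omega
    | succ n ih =>
      rcases Nat.lt_or_ge n 1 with h | hn
      · have hn0 : n = 0 := by omega
        subst hn0
        rw [h1]
        norm_num
      · obtain ⟨hs, hd⟩ := ih hn
        have hx := hrec n hn
        have ha : (4:ℝ) ≤ 4 ^ n := by
          calc (4:ℝ) = 4 ^ 1 := by norm_num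
          _ ≤ 4 ^ n := by apply pow_le_pow_right₀ (by norm_num) hn
        have hap : (0:ℝ) < 4 ^ n := by positivity
        rw [hx]
        constructor
        · simp only
          ring_nf
          linarith [hs]
        · simp only
          have h41 : (4:ℝ) ^ (n + 1) = 4 * 4 ^ n := by ring
          rw [h41]
          have e1 : (1 / (4:ℝ) ^ n) * (x n).1 + (1 - 1 / 4 ^ n) * (x n).2 -
              ((1 - 1 / 4 ^ n) * (x n).1 + (1 / 4 ^ n) * (x n).2)
              = (1 - 2 / 4 ^ n) * ((x n).2 - (x n).1) := by ring
          rw [e1]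
          have h2q : (1:ℝ) - 2 / 4 ^ n ≥ 1/2 := by
            have : 2 / (4:ℝ)^n ≤ 1/2 := by
              rw [div_le_div_iff₀ hap (by norm_num)]; linarith
            linarith
          have hd' : (x n).2 - (x n).1 ≥ 1/3 + (8/3)/4^n := hd
          rw [ge_iff_le, ← sub_nonneg]
          have expand : (1 - 2 / (4:ℝ) ^ n) * ((x n).2 - (x n).1) -
              (1/3 + 8/3 / (4 * 4 ^ n)) ≥
              (1 - 2 / (4:ℝ) ^ n) * (1/3 + (8/3)/4^n) - (1/3 + 8/3 / (4 * 4 ^ n)) := by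
            have := mul_le_mul_of_nonneg_left hd' (by linarith : (0:ℝ) ≤ 1 - 2 / 4 ^ n)
            linarith
          have final : (1 - 2 / (4:ℝ) ^ n) * (1/3 + (8/3)/4^n) - (1/3 + 8/3 / (4 * 4 ^ n))
              ≥ 0 := by
            have e2 : (1 - 2 / (4:ℝ) ^ n) * (1/3 + (8/3)/4^n) - (1/3 + 8/3 / (4 * 4 ^ n))
                = (4/3) / 4^n - (16/3) / (4^n * 4^n) := by
              field_simp
              ring
            have : (16:ℝ)/3/(4^n*4^n) ≤ 4/3/4^n := by
              rw [div_le_div_iff₀ (by positivity) hap]; nlinarith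
            linarith [e2, this]
          linarith
  have main : ∀ t ≥ 1, (x t).1 < 1 / 3 ∧ (x t).2 > 2 / 3 := by
    intro t ht
    obtain ⟨hs, hd⟩ := key t ht
    have hpos : (0:ℝ) < (8/3)/4^t := by positivity
    constructor <;> [linarith; linarith]
  refine ⟨main, ?_⟩
  rintro ⟨γ, hg1, hg2⟩
  have hsub : Filter.Tendsto (fun t => (x t).2 - (x t).1) Filter.atTop (nhds 0) := by
    have := hg2.sub hg1
    simpa using this
  have hev : ∀ᶠ t in Filter.atTop, (1:ℝ)/3 ≤ (x t).2 - (x t).1 := by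
    filter_upwards [Filter.eventually_ge_atTop 1] with t ht
    obtain ⟨hd1, hd2⟩ := main t ht
    linarith
  have : (1:ℝ)/3 ≤ 0 := ge_of_tendsto hsub hev
  linarith
end

section
/- A row-stochastic matrix A is scrambling if and only if the linear map x ↦ Ax is a proper averaging map on ℝ^n with y the identity; that is, for every x that is not a constant vector, the inclusion [min_i (Ax)^i, max_i (Ax)^i] ⊂ [min_i x^i, max_i x^i] is strict. -/
lemma my_inf_eq {n : ℕ} [Nonempty (Fin n)] (f : Fin n → ℝ) :
    ∃ i, (⨅ j, f j) = f i ∧ ∀ j, f i ≤ f j := by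
  obtain ⟨i, hi⟩ := Finite.exists_min f
  exact ⟨i, le_antisymm (ciInf_le (Set.finite_range f).bddBelow i) (le_ciInf hi), hi⟩

lemma my_sup_eq {n : ℕ} [Nonempty (Fin n)] (f : Fin n → ℝ) :
    ∃ i, (⨆ j, f j) = f i ∧ ∀ j, f j ≤ f i := by
  obtain ⟨i, hi⟩ := Finite.exists_max f
  exact ⟨i, le_antisymm (ciSup_le hi) (le_ciSup (Set.finite_range f).bddAbove i), hi⟩

lemma my_le_mulVec {n : ℕ} (A : Matrix (Fin n) (Fin n) ℝ)
    (hnn : ∀ i j, 0 ≤ A i j) (hrow : ∀ i, ∑ j, A i j = 1)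
    (x : Fin n → ℝ) (m : ℝ) (h : ∀ j, m ≤ x j) (l : Fin n) :
    m ≤ A.mulVec x l := by
  have h1 : ∑ j, A l j * m ≤ ∑ j, A l j * x j :=
    Finset.sum_le_sum fun j _ => mul_le_mul_of_nonneg_left (h j) (hnn l j)
  calc m = ∑ j, A l j * m := by rw [← Finset.sum_mul, hrow l, one_mul]
    _ ≤ ∑ j, A l j * x j := h1
    _ = A.mulVec x l := by simp [Matrix.mulVec, dotProduct]

lemma my_mulVec_le {n : ℕ} (A : Matrix (Fin n) (Fin n) ℝ)
    (hnn : ∀ i j, 0 ≤ A i j) (hrow : ∀ i, ∑ j, A i j = 1)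
    (x : Fin n → ℝ) (M : ℝ) (h : ∀ j, x j ≤ M) (l : Fin n) :
    A.mulVec x l ≤ M := by
  have h1 : ∑ j, A l j * x j ≤ ∑ j, A l j * M :=
    Finset.sum_le_sum fun j _ => mul_le_mul_of_nonneg_left (h j) (hnn l j)
  calc A.mulVec x l = ∑ j, A l j * x j := by simp [Matrix.mulVec, dotProduct]
    _ ≤ ∑ j, A l j * M := h1
    _ = M := by rw [← Finset.sum_mul, hrow l, one_mul]

/-- If the weighted average equals the minimum, every weight with positive mass sits
at the minimum. -/
lemma my_avg_eq_min {n : ℕ} (A : Matrix (Fin n) (Fin n) ℝ)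
    (hnn : ∀ i j, 0 ≤ A i j) (hrow : ∀ i, ∑ j, A i j = 1)
    (x : Fin n → ℝ) (m : ℝ) (h : ∀ j, m ≤ x j) (l : Fin n)
    (he : A.mulVec x l = m) : ∀ j, 0 < A l j → x j = m := by
  have hsum : ∑ j, A l j * (x j - m) = 0 := by
    have : ∑ j, A l j * (x j - m) = (∑ j, A l j * x j) - (∑ j, A l j * m) := by
      rw [← Finset.sum_sub_distrib]
      exact Finset.sum_congr rfl fun j _ => by ring
    rw [this, ← Finset.sum_mul, hrow l, one_mul]
    have : ∑ j, A l j * x j = m := by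
      rw [← he]; simp [Matrix.mulVec, dotProduct]
    rw [this]; ring
  have hz := (Finset.sum_eq_zero_iff_of_nonneg
    (fun j _ => mul_nonneg (hnn l j) (sub_nonneg.mpr (h j)))).mp hsum
  intro j hj
  have := hz j (Finset.mem_univ j)
  rcases mul_eq_zero.mp this with h1 | h2
  · exact absurd h1 (ne_of_gt hj)
  · linarith [sub_eq_zero.mp h2]

/-- A row-stochastic matrix A is scrambling (any two rows have a common index with
positive entries) if and only if x ↦ Ax is a proper averaging map: for every
non-constant vector x the interval [min_i (Ax)^i, max_i (Ax)^i] is strictly contained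
in [min_i x^i, max_i x^i]. -/
theorem scrambling_iff_proper {n : ℕ} (hn : 0 < n) (A : Matrix (Fin n) (Fin n) ℝ)
    (hnn : ∀ i j, 0 ≤ A i j) (hrow : ∀ i, ∑ j, A i j = 1) :
    (∀ i k, ∃ j, 0 < A i j ∧ 0 < A k j) ↔
      (∀ x : Fin n → ℝ, (¬ ∀ i j, x i = x j) →
        Set.Icc (⨅ i, A.mulVec x i) (⨆ i, A.mulVec x i) ⊂
          Set.Icc (⨅ i, x i) (⨆ i, x i)) := by
  haveI : Nonempty (Fin n) := Fin.pos_iff_nonempty.mp hn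
  constructor
  · intro hs x hx
    obtain ⟨p, hpE, hpmin⟩ := my_inf_eq x
    obtain ⟨q, hqE, hqmax⟩ := my_sup_eq x
    set m := x p with hm
    set M := x q with hM
    have hmM : m < M := by
      rcases lt_or_eq_of_le (hpmin q) with h | h
      · exact h
      · exfalso; apply hx; intro i j
        have h1 : x i = m := le_antisymm (h ▸ hqmax i) (hpmin i)
        have h2 : x j = m := le_antisymm (h ▸ hqmax j) (hpmin j)
        rw [h1, h2]
    obtain ⟨i₀, hiE, himin⟩ := my_inf_eq (A.mulVec x)
    obtain ⟨k₀, hkE, hkmax⟩ := my_sup_eq (A.mulVec x)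
    have hlow : ∀ l, m ≤ A.mulVec x l := my_le_mulVec A hnn hrow x m hpmin
    have hhigh : ∀ l, A.mulVec x l ≤ M := my_mulVec_le A hnn hrow x M hqmax
    have hma : m ≤ A.mulVec x i₀ := hlow i₀
    have hbM : A.mulVec x k₀ ≤ M := hhigh k₀
    have hkey : m < A.mulVec x i₀ ∨ A.mulVec x k₀ < M := by
      by_contra hcon
      push_neg at hcon
      obtain ⟨h1, h2⟩ := hcon
      have he1 : A.mulVec x i₀ = m := le_antisymm h1 hma
      have he2 : A.mulVec x k₀ = M := le_antisymm hbM h2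
      obtain ⟨j, hij, hkj⟩ := hs i₀ k₀
      have hx1 : x j = m := my_avg_eq_min A hnn hrow x m hpmin i₀ he1 j hij
      have hx2 : x j = M := by
        have : ∀ j, -M ≤ (-x) j := fun j => neg_le_neg (hqmax j)
        have hneg : ∀ l, A.mulVec (-x) l = -(A.mulVec x l) := fun l => by
          simp [Matrix.mulVec, dotProduct, Finset.sum_neg_distrib]
        have := my_avg_eq_min A hnn hrow (-x) (-M) this k₀ (by rw [hneg, he2]) j hkj
        simpa using this
      rw [hx1] at hx2; exact absurd hx2 (ne_of_lt hmM)
    rw [hpE, hqE, hiE, hkE]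
    rw [ssubset_iff_subset_not_subset]
    constructor
    · exact Set.Icc_subset_Icc hma hbM
    · intro hsup
      rcases hkey with h | h
      · have := hsup ⟨le_refl m, le_of_lt hmM⟩
        exact absurd this.1 (not_le.mpr h)
      · have := hsup ⟨le_of_lt hmM, le_refl M⟩
        exact absurd this.2 (not_le.mpr h)
  · intro hp i k
    by_contra hcon
    push_neg at hcon
    set x : Fin n → ℝ := fun j => if 0 < A i j then 1 else 0 with hxdef
    have hx01 : ∀ j, x j = 0 ∨ x j = 1 := fun j => by
      by_cases h : 0 < A i j <;> simp [hxdef, h]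
    have hrowpos : ∀ l, ∃ j, 0 < A l j := by
      intro l
      by_contra hc
      push_neg at hc
      have : ∀ j ∈ Finset.univ, A l j = 0 := fun j _ => le_antisymm (hc j) (hnn l j)
      have := Finset.sum_eq_zero this
      rw [hrow l] at this
      norm_num at this
    obtain ⟨j₁, hj₁⟩ := hrowpos i
    obtain ⟨j₂, hj₂⟩ := hrowpos k
    have hij₂ : ¬ 0 < A i j₂ := fun h => absurd hj₂ (not_lt.mpr (hcon j₂ h))
    have hx1 : x j₁ = 1 := by simp [hxdef, hj₁]
    have hx2 : x j₂ = 0 := by simp [hxdef, hij₂]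
    have hnc : ¬ ∀ a b, x a = x b := by
      intro h
      have := h j₁ j₂
      rw [hx1, hx2] at this
      norm_num at this
    have hxl : ∀ j, (0:ℝ) ≤ x j := fun j => by rcases hx01 j with h | h <;> rw [h] <;> norm_num
    have hxu : ∀ j, x j ≤ (1:ℝ) := fun j => by rcases hx01 j with h | h <;> rw [h] <;> norm_num
    have hinfx : (⨅ j, x j) = 0 := by
      refine le_antisymm ?_ (le_ciInf hxl)
      calc (⨅ j, x j) ≤ x j₂ := ciInf_le (Set.finite_range x).bddBelow j₂
        _ = 0 := hx2
    have hsupx : (⨆ j, x j) = 1 := by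
      refine le_antisymm (ciSup_le hxu) ?_
      calc (1:ℝ) = x j₁ := hx1.symm
        _ ≤ ⨆ j, x j := le_ciSup (Set.finite_range x).bddAbove j₁
    have hAi : A.mulVec x i = 1 := by
      have : ∀ j ∈ Finset.univ, A i j * x j = A i j := by
        intro j _
        by_cases h : 0 < A i j
        · simp [hxdef, h]
        · have : A i j = 0 := le_antisymm (not_lt.mp h) (hnn i j)
          simp [this]
      calc A.mulVec x i = ∑ j, A i j * x j := by simp [Matrix.mulVec, dotProduct]
        _ = ∑ j, A i j := Finset.sum_congr rfl this
        _ = 1 := hrow i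
    have hAk : A.mulVec x k = 0 := by
      have : ∀ j ∈ Finset.univ, A k j * x j = 0 := by
        intro j _
        by_cases h : 0 < A i j
        · have : A k j = 0 := le_antisymm (hcon j h) (hnn k j)
          simp [this]
        · simp [hxdef, h]
      calc A.mulVec x k = ∑ j, A k j * x j := by simp [Matrix.mulVec, dotProduct]
        _ = 0 := Finset.sum_eq_zero this
    have hinfA : (⨅ l, A.mulVec x l) = 0 := by
      refine le_antisymm ?_ (le_ciInf (my_le_mulVec A hnn hrow x 0 hxl))
      calc (⨅ l, A.mulVec x l) ≤ A.mulVec x k :=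
            ciInf_le (Set.finite_range _).bddBelow k
        _ = 0 := hAk
    have hsupA : (⨆ l, A.mulVec x l) = 1 := by
      refine le_antisymm (ciSup_le (my_mulVec_le A hnn hrow x 1 hxu)) ?_
      calc (1:ℝ) = A.mulVec x i := hAi.symm
        _ ≤ ⨆ l, A.mulVec x l := le_ciSup (Set.finite_range _).bddAbove i
    have := hp x hnc
    rw [hinfx, hsupx, hinfA, hsupA] at this
    exact ssubset_irrefl _ this
end
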